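/- Let η = diag(1,−1,−1,−1) over ℂ, p = iso(1,3,ℂ) ⊆ gl(5,ℂ) the complexified Poincaré algebra of block matrices M(A,b) = [[A,b],[0,0]] with Aᵀη + ηA = 0, and V ⊆ p its translation ideal {M(0,b) : b ∈ ℂ⁴}. Let g₁ be a module over p on which every element of V acts as zero, and let μ : g₁³ → p be a totally symmetric trilinear map satisfying the equivariance identity J3: ⁅x, μ(y₁,y₂,y₃)⁆ = μ(x·y₁,y₂,y₃) + μ(y₁,x·y₂,y₃) + μ(y₁,y₂,x·y₃) for all x ∈ p, yᵢ ∈ g₁. Then μ takes all its values in V, i.e. μ(y₁,y₂,y₃) ∈ V for all y₁,y₂,y₃ ∈ g₁. (Remark 4.6: if the translations act trivially on g₁, the 3-bracket of any Lie algebra of order 3 on iso(1,3,ℂ) ⊕ g₁ must land in the translations; the key fact is that the centralizer of V in p equals V.) -/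

import Mathlib

noncomputable section

/-- The Minkowski metric `η = diag(1,−1,−1,−1)` over `ℂ`. -/
def etaC : Matrix (Fin 4) (Fin 4) ℂ := Matrix.diagonal ![1, -1, -1, -1]

/-- The block matrix `M(A,b) = [[A,b],[0,0]] ∈ gl(5,ℂ)`. -/
def MblkC (A : Matrix (Fin 4) (Fin 4) ℂ) (b : Fin 4 → ℂ) :
    Matrix (Fin 4 ⊕ Fin 1) (Fin 4 ⊕ Fin 1) ℂ :=
  Matrix.fromBlocks A (Matrix.of fun i _ => b i) 0 0

/-- The Lorentz condition `Aᵀη + ηA = 0`. -/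
def IsLorentzC (A : Matrix (Fin 4) (Fin 4) ℂ) : Prop :=
  A.transpose * etaC + etaC * A = 0

/-- Remark 4.6: let `g₁` be a module over `p = iso(1,3,ℂ)` on which every translation
`M(0,b)` acts as zero, and let `μ : g₁³ → p` be a totally symmetric trilinear map
satisfying the equivariance identity J3.  Then `μ` takes all its values in the
translation ideal `V = {M(0,b)}`. -/
theorem threeBracket_valued_in_translations
    {g₁ : Type*} [AddCommGroup g₁] [Module ℂ g₁]
    (ρ : Matrix (Fin 4 ⊕ Fin 1) (Fin 4 ⊕ Fin 1) ℂ → Module.End ℂ g₁)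
    (hadd : ∀ (A : Matrix (Fin 4) (Fin 4) ℂ) (b : Fin 4 → ℂ)
      (A' : Matrix (Fin 4) (Fin 4) ℂ) (b' : Fin 4 → ℂ),
      IsLorentzC A → IsLorentzC A' →
      ρ (MblkC A b + MblkC A' b') = ρ (MblkC A b) + ρ (MblkC A' b'))
    (hsmul : ∀ (c : ℂ) (A : Matrix (Fin 4) (Fin 4) ℂ) (b : Fin 4 → ℂ),
      IsLorentzC A → ρ (c • MblkC A b) = c • ρ (MblkC A b))
    (hbrk : ∀ (A : Matrix (Fin 4) (Fin 4) ℂ) (b : Fin 4 → ℂ)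
      (A' : Matrix (Fin 4) (Fin 4) ℂ) (b' : Fin 4 → ℂ),
      IsLorentzC A → IsLorentzC A' →
      ρ ⁅MblkC A b, MblkC A' b'⁆ = ⁅ρ (MblkC A b), ρ (MblkC A' b')⁆)
    -- the translations act trivially on g₁
    (htriv : ∀ b : Fin 4 → ℂ, ρ (MblkC 0 b) = 0)
    (μ : g₁ → g₁ → g₁ → Matrix (Fin 4 ⊕ Fin 1) (Fin 4 ⊕ Fin 1) ℂ)
    -- μ takes values in p
    (hval : ∀ y₁ y₂ y₃ : g₁, ∃ A b, IsLorentzC A ∧ μ y₁ y₂ y₃ = MblkC A b)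
    -- μ is totally symmetric and trilinear
    (haddμ : ∀ y y' z w : g₁, μ (y + y') z w = μ y z w + μ y' z w)
    (hsmulμ : ∀ (a : ℂ) (y z w : g₁), μ (a • y) z w = a • μ y z w)
    (hsymm₁ : ∀ y z w : g₁, μ y z w = μ z y w)
    (hsymm₂ : ∀ y z w : g₁, μ y z w = μ y w z)
    -- J3 : equivariance
    (hJ3 : ∀ (A : Matrix (Fin 4) (Fin 4) ℂ) (b : Fin 4 → ℂ), IsLorentzC A →
      ∀ y₁ y₂ y₃ : g₁,
        ⁅MblkC A b, μ y₁ y₂ y₃⁆ =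
          μ (ρ (MblkC A b) y₁) y₂ y₃ + μ y₁ (ρ (MblkC A b) y₂) y₃ +
            μ y₁ y₂ (ρ (MblkC A b) y₃)) :
    ∀ y₁ y₂ y₃ : g₁, ∃ b : Fin 4 → ℂ, μ y₁ y₂ y₃ = MblkC 0 b := by

  intro y₁ y₂ y₃
  obtain ⟨A, b, hA, heq⟩ := hval y₁ y₂ y₃
  have hzero : ∀ z w : g₁, μ 0 z w = 0 := by
    intro z w
    have h := haddμ 0 0 z w
    rw [add_zero] at h
    exact (right_eq_add.mp h)
  have hL0 : IsLorentzC (0 : Matrix (Fin 4) (Fin 4) ℂ) := by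
    simp [IsLorentzC]
  have hcomm : ∀ b' : Fin 4 → ℂ, ⁅MblkC 0 b', MblkC A b⁆ = 0 := by
    intro b'
    have h := hJ3 0 b' hL0 y₁ y₂ y₃
    rw [htriv b'] at h
    simp only [LinearMap.zero_apply, hzero] at h
    rw [hsymm₁ y₁ 0 y₃, hzero, hsymm₂ y₁ y₂ 0, hsymm₁ y₁ 0 y₂, hzero] at h
    rw [heq] at h
    simpa using h
  have hA0 : A = 0 := by
    ext i j
    have h := hcomm (Pi.single j 1)
    rw [Ring.lie_def] at h
    have h2 := congrArg (fun M => M (Sum.inl i) (Sum.inr 0)) h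
    simp [MblkC, Matrix.fromBlocks_multiply, Matrix.mul_apply,
      Pi.single_apply, Finset.sum_ite_eq'] at h2
    simpa using h2
  exact ⟨b, by rw [heq, hA0]⟩
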